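/- arXiv:1510.04591 — 7 statements merged into one kernel-verified Lean document; each statement's English description precedes it below -/
import Mathlib

section
/- Let N be a positive integer, let D = diag(d_1, …, d_N) be a real diagonal N×N matrix with d_1 < d_2 < ⋯ < d_N, let u ∈ ℝ^N have u_j ≠ 0 for every j, let ρ > 0, and set M = D + ρ u uᵀ. Then M has N distinct real eigenvalues λ_1 < λ_2 < ⋯ < λ_N, and they strictly interlace the diagonal entries of D: d_1 < λ_1 < d_2 < λ_2 < ⋯ < d_N < λ_N. -/
open Matrix BigOperators Filter Set Topology

section BNS

variable {N : ℕ} (d u : Fin N → ℝ) (ρ : ℝ)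

/-- The secular function. -/
noncomputable def secf (t : ℝ) : ℝ := 1 + ρ * ∑ j, u j ^ 2 * (d j - t)⁻¹

lemma sq_pos' (hu : ∀ j, u j ≠ 0) (j : Fin N) : 0 < u j ^ 2 :=
  lt_of_le_of_ne (sq_nonneg _) (Ne.symm (pow_ne_zero 2 (hu j)))

lemma secf_lt (hN : 0 < N) (hu : ∀ j, u j ≠ 0) (hρ : 0 < ρ) {a b : ℝ} (hab : a < b)
    (hsep : ∀ j, d j < a ∨ b < d j) : secf d u ρ a < secf d u ρ b := by
  unfold secf
  have key : ∀ j : Fin N, u j ^ 2 * (d j - a)⁻¹ < u j ^ 2 * (d j - b)⁻¹ := by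
    intro j
    apply mul_lt_mul_of_pos_left _ (sq_pos' u hu j)
    rcases hsep j with h | h
    · have h1 : d j - a < 0 := by linarith
      have h2 : d j - b < 0 := by linarith
      exact (inv_lt_inv_of_neg h1 h2).2 (by linarith)
    · exact inv_strictAnti₀ (by linarith) (by linarith)
  have hne : (Finset.univ : Finset (Fin N)).Nonempty := ⟨⟨0, hN⟩, Finset.mem_univ _⟩
  have hsum := Finset.sum_lt_sum_of_nonempty hne (fun j _ => key j)
  have := mul_lt_mul_of_pos_left hsum hρ
  linarith

lemma mulVec_apply' {M : Matrix (Fin N) (Fin N) ℝ}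
    (hM : M = Matrix.diagonal d + ρ • Matrix.vecMulVec u u) (x : Fin N → ℝ) (j : Fin N) :
    M.mulVec x j = d j * x j + ρ * (u j * ∑ l, u l * x l) := by
  subst hM
  simp [Matrix.mulVec, dotProduct, Matrix.add_apply, Matrix.smul_apply, Matrix.vecMulVec_apply,
    Matrix.diagonal_apply, Finset.sum_add_distrib, add_mul, Finset.mul_sum, mul_assoc,
    Finset.sum_ite_eq, ite_mul]

lemma root_to_eigen (hN : 0 < N) (hu : ∀ j, u j ≠ 0) (hρ : 0 < ρ)
    {M : Matrix (Fin N) (Fin N) ℝ}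
    (hM : M = Matrix.diagonal d + ρ • Matrix.vecMulVec u u) {μ : ℝ} (hμd : ∀ j, d j ≠ μ)
    (hf : secf d u ρ μ = 0) : ∃ x : Fin N → ℝ, x ≠ 0 ∧ M.mulVec x = μ • x := by
  refine ⟨fun j => u j * (d j - μ)⁻¹, ?_, ?_⟩
  · intro h
    have h0 := congrFun h ⟨0, hN⟩
    exact (mul_ne_zero (hu _) (inv_ne_zero (sub_ne_zero.2 (hμd _)))) h0
  · funext j
    rw [mulVec_apply' d u ρ hM]
    have hsum : ∑ l, u l * (u l * (d l - μ)⁻¹) = -ρ⁻¹ := by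
      have he : ∑ l, u l * (u l * (d l - μ)⁻¹) = ∑ l, u l ^ 2 * (d l - μ)⁻¹ :=
        Finset.sum_congr rfl (fun l _ => by ring)
      rw [he]
      unfold secf at hf
      have hρ' : ρ ≠ 0 := ne_of_gt hρ
      apply mul_left_cancel₀ hρ'
      rw [mul_neg, mul_inv_cancel₀ hρ']
      linarith
    rw [hsum]
    have hdj : d j - μ ≠ 0 := sub_ne_zero.2 (hμd j)
    have hρ' : ρ ≠ 0 := ne_of_gt hρ
    simp only [Pi.smul_apply, smul_eq_mul]
    field_simp
    ring

lemma eigen_to_root (hd : StrictMono d) (hu : ∀ j, u j ≠ 0) (hρ : 0 < ρ)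
    {M : Matrix (Fin N) (Fin N) ℝ}
    (hM : M = Matrix.diagonal d + ρ • Matrix.vecMulVec u u) {μ : ℝ}
    (hx : ∃ x : Fin N → ℝ, x ≠ 0 ∧ M.mulVec x = μ • x) :
    (∀ j, d j ≠ μ) ∧ secf d u ρ μ = 0 := by
  obtain ⟨x, hx0, hxe⟩ := hx
  set s := ∑ l, u l * x l with hs
  have hrow : ∀ j, d j * x j + ρ * (u j * s) = μ * x j := by
    intro j
    have h := congrFun hxe j
    rw [mulVec_apply' d u ρ hM] at h
    simpa using h
  have hne : ∀ k, d k ≠ μ := by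
    intro k hk
    have hs0 : s = 0 := by
      have h := hrow k
      rw [hk] at h
      have h2 : ρ * (u k * s) = 0 := by linarith
      rcases mul_eq_zero.1 h2 with h | h
      · exact absurd h (ne_of_gt hρ)
      · rcases mul_eq_zero.1 h with h | h
        · exact absurd h (hu k)
        · exact h
    have hxj : ∀ j, j ≠ k → x j = 0 := by
      intro j hj
      have h := hrow j
      rw [hs0] at h
      have hdd : d j ≠ μ := by
        rw [← hk]; exact fun h' => hj (hd.injective h')
      have h2 : (d j - μ) * x j = 0 := by ring_nf; linarith
      rcases mul_eq_zero.1 h2 with h' | h'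
      · exact absurd (sub_eq_zero.1 h') hdd
      · exact h'
    have hsk : s = u k * x k := by
      rw [hs, Finset.sum_eq_single k]
      · intro b _ hb; rw [hxj b hb]; ring
      · intro h; exact absurd (Finset.mem_univ k) h
    have hxk : x k = 0 := by
      have h' : u k * x k = 0 := by rw [← hsk]; exact hs0
      rcases mul_eq_zero.1 h' with h | h
      · exact absurd h (hu k)
      · exact h
    apply hx0
    funext j
    by_cases h : j = k
    · rw [h]; exact hxk
    · exact hxj j h
  refine ⟨hne, ?_⟩
  have hxj : ∀ j, x j = ρ * u j * s * (μ - d j)⁻¹ := by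
    intro j
    have h2 : μ - d j ≠ 0 := sub_ne_zero.2 (fun h => hne j h.symm)
    have h1 : (μ - d j) * x j = ρ * (u j * s) := by
      have := hrow j; ring_nf; ring_nf at this ⊢; linarith
    field_simp
    linarith [h1]
  have hs_ne : s ≠ 0 := by
    intro h0
    apply hx0
    funext j
    rw [hxj j, h0]
    simp
  have key : s = ρ * s * ∑ j, u j ^ 2 * (μ - d j)⁻¹ := by
    conv_lhs => rw [hs]
    rw [Finset.mul_sum]
    exact Finset.sum_congr rfl (fun j _ => by rw [hxj j]; ring)
  have key2 : 1 = ρ * ∑ j, u j ^ 2 * (μ - d j)⁻¹ := by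
    have h := key
    rw [mul_comm ρ s, mul_assoc] at h
    conv_lhs at h => rw [← mul_one s]
    exact mul_left_cancel₀ hs_ne h
  unfold secf
  have hflip : ∑ j, u j ^ 2 * (d j - μ)⁻¹ = -∑ j, u j ^ 2 * (μ - d j)⁻¹ := by
    rw [← Finset.sum_neg_distrib]
    refine Finset.sum_congr rfl (fun j _ => ?_)
    have : d j - μ = -(μ - d j) := by ring
    rw [this, inv_neg]; ring
  rw [hflip]
  linear_combination key2

lemma tendsto_secf_right (hu : ∀ j, u j ≠ 0) (hρ : 0 < ρ) (hdi : Function.Injective d)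
    (k : Fin N) : Tendsto (secf d u ρ) (𝓝[>] (d k)) atBot := by
  have hsplit : ∀ t, secf d u ρ t =
      1 + ρ * (u k ^ 2 * (d k - t)⁻¹ + ∑ j ∈ Finset.univ.erase k, u j ^ 2 * (d j - t)⁻¹) := by
    intro t
    unfold secf
    rw [← Finset.add_sum_erase _ _ (Finset.mem_univ k)]
  have h1 : Tendsto (fun t => (d k - t)⁻¹) (𝓝[>] (d k)) atBot := by
    have ha : Tendsto (fun t : ℝ => t - d k) (𝓝[>] (d k)) (𝓝[>] (0:ℝ)) := by
      apply tendsto_nhdsWithin_of_tendsto_nhds_of_eventually_within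
      · exact ((continuous_sub_right (d k)).tendsto' (d k) 0 (by simp)).mono_left
          nhdsWithin_le_nhds
      · filter_upwards [self_mem_nhdsWithin] with t ht
        simpa [sub_pos] using ht
    have hb := tendsto_inv_nhdsGT_zero.comp ha
    have hc := tendsto_neg_atTop_atBot.comp hb
    refine hc.congr fun t => ?_
    simp only [Function.comp_apply]
    rw [← inv_neg, neg_sub]
  have h2 : Tendsto (fun t => u k ^ 2 * (d k - t)⁻¹) (𝓝[>] (d k)) atBot :=
    h1.const_mul_atBot (sq_pos' u hu k)
  have h3 : Tendsto (fun t => ∑ j ∈ Finset.univ.erase k, u j ^ 2 * (d j - t)⁻¹)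
      (𝓝[>] (d k)) (𝓝 (∑ j ∈ Finset.univ.erase k, u j ^ 2 * (d j - d k)⁻¹)) := by
    apply tendsto_finset_sum
    intro j hj
    have hjk : d j - d k ≠ 0 :=
      sub_ne_zero.2 (fun h => (Finset.mem_erase.1 hj).1 (hdi h))
    have hc : ContinuousAt (fun t => u j ^ 2 * (d j - t)⁻¹) (d k) :=
      continuousAt_const.mul ((continuousAt_const.sub continuousAt_id).inv₀ hjk)
    exact hc.continuousWithinAt
  have h4 := (h2.atBot_add h3).const_mul_atBot hρ
  have h5 := tendsto_atBot_add_const_left _ 1 h4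
  exact h5.congr fun t => (hsplit t).symm

lemma tendsto_secf_left (hu : ∀ j, u j ≠ 0) (hρ : 0 < ρ) (hdi : Function.Injective d)
    (k : Fin N) : Tendsto (secf d u ρ) (𝓝[<] (d k)) atTop := by
  have hsplit : ∀ t, secf d u ρ t =
      1 + ρ * (u k ^ 2 * (d k - t)⁻¹ + ∑ j ∈ Finset.univ.erase k, u j ^ 2 * (d j - t)⁻¹) := by
    intro t
    unfold secf
    rw [← Finset.add_sum_erase _ _ (Finset.mem_univ k)]
  have h1 : Tendsto (fun t => (d k - t)⁻¹) (𝓝[<] (d k)) atTop := by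
    have ha : Tendsto (fun t : ℝ => d k - t) (𝓝[<] (d k)) (𝓝[>] (0:ℝ)) := by
      apply tendsto_nhdsWithin_of_tendsto_nhds_of_eventually_within
      · exact (((continuous_const.sub continuous_id :
            Continuous fun t : ℝ => d k - t)).tendsto' (d k) 0 (by simp)).mono_left
          nhdsWithin_le_nhds
      · filter_upwards [self_mem_nhdsWithin] with t ht
        simpa [sub_pos] using ht
    exact tendsto_inv_nhdsGT_zero.comp ha
  have h2 : Tendsto (fun t => u k ^ 2 * (d k - t)⁻¹) (𝓝[<] (d k)) atTop :=
    h1.const_mul_atTop (sq_pos' u hu k)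
  have h3 : Tendsto (fun t => ∑ j ∈ Finset.univ.erase k, u j ^ 2 * (d j - t)⁻¹)
      (𝓝[<] (d k)) (𝓝 (∑ j ∈ Finset.univ.erase k, u j ^ 2 * (d j - d k)⁻¹)) := by
    apply tendsto_finset_sum
    intro j hj
    have hjk : d j - d k ≠ 0 :=
      sub_ne_zero.2 (fun h => (Finset.mem_erase.1 hj).1 (hdi h))
    have hc : ContinuousAt (fun t => u j ^ 2 * (d j - t)⁻¹) (d k) :=
      continuousAt_const.mul ((continuousAt_const.sub continuousAt_id).inv₀ hjk)
    exact hc.continuousWithinAt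
  have h4 := (h2.atTop_add h3).const_mul_atTop hρ
  have h5 := tendsto_atTop_add_const_left _ 1 h4
  exact h5.congr fun t => (hsplit t).symm

lemma tendsto_secf_atTop : Tendsto (secf d u ρ) atTop (𝓝 1) := by
  have hterm : ∀ j : Fin N, Tendsto (fun t : ℝ => u j ^ 2 * (d j - t)⁻¹) atTop (𝓝 0) := by
    intro j
    have h1 : Tendsto (fun t : ℝ => t - d j) atTop atTop :=
      tendsto_atTop_add_const_right _ (-(d j)) tendsto_id
    have h2 := tendsto_inv_atTop_zero.comp h1
    have h3 := h2.neg
    have h4 : Tendsto (fun t : ℝ => (d j - t)⁻¹) atTop (𝓝 0) := by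
      rw [← neg_zero]
      refine h3.congr fun t => ?_
      simp only [Function.comp_apply]
      rw [← inv_neg, neg_sub]
    have := h4.const_mul (u j ^ 2)
    simpa using this
  have hsum : Tendsto (fun t => ∑ j : Fin N, u j ^ 2 * (d j - t)⁻¹) atTop (𝓝 0) := by
    have := tendsto_finset_sum Finset.univ (fun j _ => hterm j)
    simpa using this
  have := (hsum.const_mul ρ).const_add 1
  rw [mul_zero, add_zero] at this
  exact this

lemma sep_lemma (hd : StrictMono d) (i : Fin N) {p q : ℝ} (hp : d i < p)
    (hq : ∀ h : i.val + 1 < N, q < d ⟨i.val + 1, h⟩) (j : Fin N) : d j < p ∨ q < d j := by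
  by_cases hj : j.val ≤ i.val
  · exact Or.inl (lt_of_le_of_lt (hd.monotone hj) hp)
  · right
    push_neg at hj
    have h : i.val + 1 < N := lt_of_le_of_lt hj j.isLt
    refine lt_of_lt_of_le (hq h) (hd.monotone ?_)
    simp only [Fin.le_def]
    omega

lemma exists_root_Ioo (hN : 0 < N) (hd : StrictMono d) (hu : ∀ j, u j ≠ 0) (hρ : 0 < ρ)
    (i : Fin N) (h : i.val + 1 < N) :
    ∃ t, d i < t ∧ t < d ⟨i.val + 1, h⟩ ∧ secf d u ρ t = 0 := by
  set b := d ⟨i.val + 1, h⟩ with hb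
  have hib : d i < b := hd (by simp [Fin.lt_def])
  obtain ⟨a, hfa, hab, hia⟩ :
      ∃ a, secf d u ρ a < 0 ∧ a < b ∧ d i < a := by
    have hA := tendsto_secf_right d u ρ hu hρ hd.injective i
    have hev : ∀ᶠ t in 𝓝[>] (d i), secf d u ρ t < 0 := hA.eventually (eventually_lt_atBot 0)
    have hev2 : ∀ᶠ t in 𝓝[>] (d i), t < b :=
      eventually_nhdsWithin_of_eventually_nhds (eventually_lt_nhds hib)
    have hev3 : ∀ᶠ t in 𝓝[>] (d i), d i < t := eventually_mem_nhdsWithin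
    obtain ⟨a, h1, h2, h3⟩ := (hev.and (hev2.and hev3)).exists
    exact ⟨a, h1, h2, h3⟩
  obtain ⟨c, hfc, hcb, hic⟩ :
      ∃ c, 0 < secf d u ρ c ∧ c < b ∧ d i < c := by
    have hB := tendsto_secf_left d u ρ hu hρ hd.injective ⟨i.val + 1, h⟩
    have hev : ∀ᶠ t in 𝓝[<] b, 0 < secf d u ρ t := hB.eventually (eventually_gt_atTop 0)
    have hev2 : ∀ᶠ t in 𝓝[<] b, t < b := eventually_mem_nhdsWithin
    have hev3 : ∀ᶠ t in 𝓝[<] b, d i < t :=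
      eventually_nhdsWithin_of_eventually_nhds (eventually_gt_nhds hib)
    obtain ⟨c, h1, h2, h3⟩ := (hev.and (hev2.and hev3)).exists
    exact ⟨c, h1, h2, h3⟩
  have hac : a < c := by
    by_contra hle
    push_neg at hle
    rcases eq_or_lt_of_le hle with heq | hlt
    · rw [heq] at hfc; linarith
    · have := secf_lt d u ρ hN hu hρ hlt
        (sep_lemma d hd i hic (fun h' => lt_of_lt_of_le hab (le_of_eq rfl)))
      linarith
  have hcont : ContinuousOn (secf d u ρ) (Icc a c) := by
    intro t ht
    apply ContinuousAt.continuousWithinAt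
    apply continuousAt_const.add
    apply continuousAt_const.mul
    apply tendsto_finset_sum
    intro j _
    have hjt : d j - t ≠ 0 := by
      rcases sep_lemma d hd i hia (fun h' => hcb) j with hlt | hgt
      · exact sub_ne_zero.2 (ne_of_lt (lt_of_lt_of_le hlt ht.1))
      · exact sub_ne_zero.2 (ne_of_gt (lt_of_le_of_lt ht.2 hgt))
    exact continuousAt_const.mul ((continuousAt_const.sub continuousAt_id).inv₀ hjt)
  have hmem : (0:ℝ) ∈ Icc (secf d u ρ a) (secf d u ρ c) := ⟨le_of_lt hfa, le_of_lt hfc⟩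
  obtain ⟨t, ht, hft⟩ := intermediate_value_Icc (le_of_lt hac) hcont hmem
  exact ⟨t, lt_of_lt_of_le hia ht.1, lt_of_le_of_lt ht.2 hcb, hft⟩

lemma exists_root_top (hN : 0 < N) (hd : StrictMono d) (hu : ∀ j, u j ≠ 0) (hρ : 0 < ρ) :
    ∃ t, (∀ j, d j < t) ∧ secf d u ρ t = 0 := by
  have hN1 : N - 1 < N := by omega
  set k : Fin N := ⟨N - 1, hN1⟩ with hk
  have hmax : ∀ j : Fin N, d j ≤ d k := by
    intro j
    apply hd.monotone
    simp only [Fin.le_def]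
    exact Nat.le_sub_one_of_lt j.isLt
  obtain ⟨a, hfa, hia⟩ : ∃ a, secf d u ρ a < 0 ∧ d k < a := by
    have hA := tendsto_secf_right d u ρ hu hρ hd.injective k
    have hev : ∀ᶠ t in 𝓝[>] (d k), secf d u ρ t < 0 := hA.eventually (eventually_lt_atBot 0)
    have hev3 : ∀ᶠ t in 𝓝[>] (d k), d k < t := eventually_mem_nhdsWithin
    obtain ⟨a, h1, h3⟩ := (hev.and hev3).exists
    exact ⟨a, h1, h3⟩
  obtain ⟨c, hfc, hac⟩ : ∃ c, 0 < secf d u ρ c ∧ a < c := by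
    have hB := tendsto_secf_atTop d u ρ
    have hev : ∀ᶠ t in atTop, 0 < secf d u ρ t := hB.eventually (eventually_gt_nhds one_pos)
    obtain ⟨c, h1, h2⟩ := (hev.and (eventually_gt_atTop a)).exists
    exact ⟨c, h1, h2⟩
  have hcont : ContinuousOn (secf d u ρ) (Icc a c) := by
    intro t ht
    apply ContinuousAt.continuousWithinAt
    apply continuousAt_const.add
    apply continuousAt_const.mul
    apply tendsto_finset_sum
    intro j _
    have hjt : d j - t ≠ 0 :=
      sub_ne_zero.2 (ne_of_lt (lt_of_le_of_lt (hmax j) (lt_of_lt_of_le hia ht.1)))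
    exact continuousAt_const.mul ((continuousAt_const.sub continuousAt_id).inv₀ hjt)
  have hmem : (0:ℝ) ∈ Icc (secf d u ρ a) (secf d u ρ c) := ⟨le_of_lt hfa, le_of_lt hfc⟩
  obtain ⟨t, ht, hft⟩ := intermediate_value_Icc (le_of_lt hac) hcont hmem
  exact ⟨t, fun j => lt_of_le_of_lt (hmax j) (lt_of_lt_of_le hia ht.1), hft⟩

end BNS

/-- Bunch–Nielsen–Sorensen: the eigenvalues of a diagonal plus positive rank-one
matrix are distinct and strictly interlace the diagonal entries. -/
theorem stmt0 (N : ℕ) (hN : 0 < N) (d : Fin N → ℝ) (hd : StrictMono d)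
    (u : Fin N → ℝ) (hu : ∀ j, u j ≠ 0) (ρ : ℝ) (hρ : 0 < ρ)
    (M : Matrix (Fin N) (Fin N) ℝ)
    (hM : M = Matrix.diagonal d + ρ • Matrix.vecMulVec u u) :
    ∃ lam : Fin N → ℝ,
      StrictMono lam ∧
      (∀ i, ∃ x : Fin N → ℝ, x ≠ 0 ∧ M.mulVec x = lam i • x) ∧
      (∀ μ : ℝ, (∃ x : Fin N → ℝ, x ≠ 0 ∧ M.mulVec x = μ • x) → ∃ i, μ = lam i) ∧
      (∀ i, d i < lam i) ∧
      (∀ i : Fin N, ∀ h : i.val + 1 < N, lam i < d ⟨i.val + 1, h⟩) := by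
  have hroot : ∀ i : Fin N,
      ∃ t, d i < t ∧ (∀ h : i.val + 1 < N, t < d ⟨i.val + 1, h⟩) ∧ secf d u ρ t = 0 := by
    intro i
    by_cases h : i.val + 1 < N
    · obtain ⟨t, h1, h2, h3⟩ := exists_root_Ioo d u ρ hN hd hu hρ i h
      exact ⟨t, h1, fun _ => h2, h3⟩
    · obtain ⟨t, h1, h3⟩ := exists_root_top d u ρ hN hd hu hρ
      exact ⟨t, h1 i, fun h' => absurd h' h, h3⟩
  choose lam h1 h2 h3 using hroot
  have hmono : StrictMono lam := by
    intro i j hij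
    have hij' : i.val + 1 ≤ j.val := hij
    have hN' : i.val + 1 < N := lt_of_le_of_lt hij' j.isLt
    calc lam i < d ⟨i.val + 1, hN'⟩ := h2 i hN'
      _ ≤ d j := hd.monotone (by simp only [Fin.le_def]; omega)
      _ < lam j := h1 j
  have hlam_ne : ∀ i j, d j ≠ lam i := by
    intro i j
    rcases sep_lemma d hd i (h1 i) (h2 i) j with h | h
    · exact ne_of_lt h
    · exact ne_of_gt h
  refine ⟨lam, hmono, ?_, ?_, h1, h2⟩
  · intro i
    exact root_to_eigen d u ρ hN hu hρ hM (hlam_ne i) (h3 i)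
  · intro μ hμ
    obtain ⟨hne, hf⟩ := eigen_to_root d u ρ hd hu hρ hM hμ
    have h0 : d ⟨0, hN⟩ < μ := by
      rcases lt_or_ge (d ⟨0, hN⟩) μ with h | h
      · exact h
      · exfalso
        have hlt : ∀ j, μ < d j := by
          intro j
          have h0' : μ ≤ d j := le_trans (lt_of_le_of_ne h (Ne.symm (hne _))).le
            (hd.monotone (by simp [Fin.le_def]))
          exact lt_of_le_of_ne h0' (Ne.symm (hne j))
        have hpos : ∀ j : Fin N, 0 < u j ^ 2 * (d j - μ)⁻¹ := fun j =>
          mul_pos (sq_pos' u hu j) (inv_pos.2 (by linarith [hlt j]))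
        have hsum := Finset.sum_pos (fun j (_ : j ∈ Finset.univ) => hpos j)
          ⟨⟨0, hN⟩, Finset.mem_univ _⟩
        unfold secf at hf
        nlinarith
    set S := Finset.univ.filter (fun i : Fin N => d i < μ) with hS
    have hSne : S.Nonempty := ⟨⟨0, hN⟩, by simp [hS, h0]⟩
    set i := S.max' hSne with hi
    have hi1 : d i < μ := (Finset.mem_filter.1 (S.max'_mem hSne)).2
    have hi2 : ∀ h : i.val + 1 < N, μ < d ⟨i.val + 1, h⟩ := by
      intro h
      have hnm : (⟨i.val + 1, h⟩ : Fin N) ∉ S := by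
        intro hmem
        have := S.le_max' _ hmem
        rw [← hi] at this
        simp only [Fin.le_def] at this
        omega
      have hnl : ¬ d ⟨i.val + 1, h⟩ < μ := by
        intro hl
        exact hnm (Finset.mem_filter.2 ⟨Finset.mem_univ _, hl⟩)
      exact lt_of_le_of_ne (not_lt.1 hnl) (Ne.symm (hne _))
    refine ⟨i, ?_⟩
    rcases lt_trichotomy μ (lam i) with hlt | heq | hgt
    · exfalso
      have := secf_lt d u ρ hN hu hρ hlt (sep_lemma d hd i hi1 (h2 i))
      rw [hf, h3 i] at this
      exact lt_irrefl 0 this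
    · exact heq
    · exfalso
      have := secf_lt d u ρ hN hu hρ hgt (sep_lemma d hd i (h1 i) hi2)
      rw [hf, h3 i] at this
      exact lt_irrefl 0 this
end

section
/- Let N be a positive integer, let D = diag(d_1, …, d_N) be a real diagonal N×N matrix with d_1 < d_2 < ⋯ < d_N, let u ∈ ℝ^N have u_j ≠ 0 for every j, let ρ > 0, and set M = D + ρ u uᵀ. If λ is any eigenvalue of M, then λ ≠ d_j for every j, and the nonzero vector q ∈ ℝ^N with entries q_j = u_j/(d_j − λ) satisfies M q = λ q. -/
open Matrix BigOperators

lemma stmt1_aux (N : ℕ) (d u v : Fin N → ℝ) (ρ : ℝ) (i : Fin N) :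
    ((Matrix.diagonal d + ρ • Matrix.vecMulVec u u) *ᵥ v) i
      = d i * v i + ρ * (∑ j, u j * v j) * u i := by
  rw [Matrix.add_mulVec, Pi.add_apply, Matrix.mulVec_diagonal, Matrix.smul_mulVec,
    Pi.smul_apply, smul_eq_mul]
  congr 1
  rw [mul_assoc]
  congr 1
  simp only [Matrix.mulVec, dotProduct, Matrix.vecMulVec_apply, Finset.sum_mul]
  exact Finset.sum_congr rfl fun j _ => by ring

/-- An eigenvalue of `D + ρ u uᵀ` differs from all diagonal entries `d j`, and the
vector with entries `u j / (d j - λ)` is a corresponding (nonzero) eigenvector. -/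
theorem stmt1 (N : ℕ) (hN : 0 < N) (d : Fin N → ℝ) (hd : StrictMono d)
    (u : Fin N → ℝ) (hu : ∀ j, u j ≠ 0) (ρ : ℝ) (hρ : 0 < ρ)
    (M : Matrix (Fin N) (Fin N) ℝ)
    (hM : M = Matrix.diagonal d + ρ • Matrix.vecMulVec u u)
    (lam : ℝ) (hlam : ∃ x : Fin N → ℝ, x ≠ 0 ∧ M.mulVec x = lam • x) :
    (∀ j, lam ≠ d j) ∧
    (fun j => u j / (d j - lam)) ≠ (0 : Fin N → ℝ) ∧
    M.mulVec (fun j => u j / (d j - lam)) = lam • (fun j => u j / (d j - lam)) := by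
  obtain ⟨x, hx0, hx⟩ := hlam
  subst hM
  set c : ℝ := ∑ j, u j * x j with hc
  have key : ∀ i, d i * x i + ρ * c * u i = lam * x i := by
    intro i
    have h := congrFun hx i
    rw [stmt1_aux] at h
    simpa using h
  have hcne : c ≠ 0 := by
    intro hc0
    rw [hc0] at key
    simp only [mul_zero, zero_mul, add_zero] at key
    obtain ⟨i, hi⟩ := Function.ne_iff.mp hx0
    simp only [Pi.zero_apply] at hi
    have hlami : d i = lam := by
      rcases mul_eq_zero.mp (show (d i - lam) * x i = 0 by linear_combination key i) with h | h
      · linarith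
      · exact absurd h hi
    have hxj : ∀ j, j ≠ i → x j = 0 := by
      intro j hj
      have hdj : d j ≠ lam := fun h => hj (hd.injective (by rw [h, hlami]))
      rcases mul_eq_zero.mp (show (d j - lam) * x j = 0 by linear_combination key j) with h | h
      · exact absurd (by linarith : d j = lam) hdj
      · exact h
    have hcv : c = u i * x i := by
      rw [hc, Finset.sum_eq_single i]
      · intro j _ hj; rw [hxj j hj, mul_zero]
      · intro h; exact absurd (Finset.mem_univ i) h
    exact (mul_ne_zero (hu i) hi) (hc0 ▸ hcv.symm)
  have hne : ∀ j, lam ≠ d j := by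
    intro j hlj
    have h := key j
    rw [← hlj] at h
    have h2 : ρ * c * u j = 0 := by linarith
    rcases mul_eq_zero.mp h2 with h | h
    · rcases mul_eq_zero.mp h with h' | h'
      · exact hρ.ne' h'
      · exact hcne h'
    · exact hu j h
  have hsub : ∀ j, d j - lam ≠ 0 := fun j h => hne j (by linarith)
  have hxq : ∀ i, x i = -(ρ * c) * (u i / (d i - lam)) := by
    intro i
    rw [← mul_div_assoc, eq_div_iff (hsub i)]
    linear_combination key i
  have hS : ρ * (∑ j, u j * (u j / (d j - lam))) = -1 := by
    have h1 : c = -(ρ * c) * ∑ j, u j * (u j / (d j - lam)) := by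
      conv_lhs => rw [hc]
      rw [Finset.mul_sum]
      exact Finset.sum_congr rfl fun j _ => by rw [hxq j]; ring
    have h2 : c * (1 + ρ * ∑ j, u j * (u j / (d j - lam))) = 0 := by
      rw [mul_add, mul_one]; linear_combination h1
    rcases mul_eq_zero.mp h2 with h | h
    · exact absurd h hcne
    · linarith
  refine ⟨hne, ?_, ?_⟩
  · intro h
    have h0 := congrFun h ⟨0, hN⟩
    exact div_ne_zero (hu _) (hsub _) h0
  · funext i
    rw [stmt1_aux]
    have hS' : ρ * (∑ j, u j * (u j / (d j - lam))) * u i = -u i := by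
      rw [hS]; ring
    rw [hS', Pi.smul_apply, smul_eq_mul]
    field_simp [hsub i]
    ring
end

section
/- Let N be a positive integer, let D = diag(d_1, …, d_N) be a real diagonal N×N matrix with d_1 < d_2 < ⋯ < d_N, let u ∈ ℝ^N have u_j ≠ 0 for every j, let ρ > 0, and set M = D + ρ u uᵀ. Let λ_1 < ⋯ < λ_N be the eigenvalues of M (none of which equals any d_i), define v_j = 1/√(∑_{k=1}^N u_k²/(d_k − λ_j)²), and let Q be the N×N matrix with entries Q_{ij} = u_i v_j/(d_i − λ_j). Then Q is an orthogonal matrix (Qᵀ Q = I) and M Q = Q Λ, where Λ = diag(λ_1, …, λ_N); equivalently M = Q Λ Qᵀ. -/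
open Matrix BigOperators

/-- Secular equation: each eigenvalue `lam j` of `M = D + ρ u uᵀ` satisfies
`∑ k, u k ^ 2 / (d k - lam j) = -1/ρ`. -/
theorem secular_eq (N : ℕ) (d : Fin N → ℝ) (u : Fin N → ℝ) (ρ : ℝ) (hρ : 0 < ρ)
    (M : Matrix (Fin N) (Fin N) ℝ)
    (hM : M = Matrix.diagonal d + ρ • Matrix.vecMulVec u u)
    (lam : Fin N → ℝ)
    (heig : ∀ j, ∃ x : Fin N → ℝ, x ≠ 0 ∧ M.mulVec x = lam j • x)
    (hne : ∀ i j, lam j ≠ d i) (j : Fin N) :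
    ∑ k, u k ^ 2 / (d k - lam j) = -1/ρ := by
  obtain ⟨x, hx0, hxe⟩ := heig j
  set c : ℝ := ∑ k, u k * x k with hc
  have hdne : ∀ i, lam j - d i ≠ 0 := fun i => sub_ne_zero.mpr (hne i j)
  have hxi : ∀ i, d i * x i + ρ * (u i * c) = lam j * x i := by
    intro i
    have h := congrFun hxe i
    rw [hM, Matrix.add_mulVec, Matrix.smul_mulVec] at h
    simp only [Pi.add_apply, Pi.smul_apply, smul_eq_mul, Matrix.mulVec_diagonal] at h
    rw [show (Matrix.vecMulVec u u).mulVec x i = u i * c by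
      rw [hc, Finset.mul_sum]
      simp only [Matrix.mulVec, dotProduct, Matrix.vecMulVec_apply]
      exact Finset.sum_congr rfl fun k _ => mul_assoc _ _ _] at h
    exact h
  have hxi' : ∀ i, x i = ρ * (u i * c) / (lam j - d i) := by
    intro i
    rw [eq_div_iff (hdne i)]
    have h := hxi i
    ring_nf
    nlinarith [h]
  have hcne : c ≠ 0 := by
    intro h0
    apply hx0
    funext i
    simp [hxi' i, h0]
  have hT : c = ρ * c * ∑ k, u k ^ 2 / (lam j - d k) := by
    rw [Finset.mul_sum]
    nth_rewrite 1 [hc]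
    refine Finset.sum_congr rfl fun k _ => ?_
    rw [hxi' k]
    field_simp [hdne k]
  have h2 : c * (ρ * (∑ k, u k ^ 2 / (lam j - d k)) - 1) = 0 := by linear_combination -hT
  have hT2 : ∑ k, u k ^ 2 / (lam j - d k) = 1 / ρ := by
    rcases mul_eq_zero.mp h2 with h | h
    · exact absurd h hcne
    · field_simp
      linarith [h]
  calc ∑ k, u k ^ 2 / (d k - lam j) = ∑ k, -(u k ^ 2 / (lam j - d k)) := by
        refine Finset.sum_congr rfl fun k _ => ?_
        rw [show d k - lam j = -(lam j - d k) by ring, div_neg]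
      _ = -(1/ρ) := by rw [Finset.sum_neg_distrib, hT2]
      _ = -1/ρ := by ring

/-- The matrix `Q` with entries `u i * v j / (d i - λ j)`, where `v j` are the
normalization constants, is an orthogonal eigenvector matrix of `M = D + ρ u uᵀ`. -/
theorem stmt2 (N : ℕ) (hN : 0 < N) (d : Fin N → ℝ) (hd : StrictMono d)
    (u : Fin N → ℝ) (hu : ∀ j, u j ≠ 0) (ρ : ℝ) (hρ : 0 < ρ)
    (M : Matrix (Fin N) (Fin N) ℝ)
    (hM : M = Matrix.diagonal d + ρ • Matrix.vecMulVec u u)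
    (lam : Fin N → ℝ) (hmono : StrictMono lam)
    (heig : ∀ j, ∃ x : Fin N → ℝ, x ≠ 0 ∧ M.mulVec x = lam j • x)
    (hall : ∀ μ : ℝ, (∃ x : Fin N → ℝ, x ≠ 0 ∧ M.mulVec x = μ • x) → ∃ j, μ = lam j)
    (hne : ∀ i j, lam j ≠ d i)
    (v : Fin N → ℝ)
    (hv : ∀ j, v j = 1 / Real.sqrt (∑ k, u k ^ 2 / (d k - lam j) ^ 2))
    (Q : Matrix (Fin N) (Fin N) ℝ)
    (hQ : ∀ i j, Q i j = u i * v j / (d i - lam j)) :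
    Qᵀ * Q = 1 ∧ M * Q = Q * Matrix.diagonal lam ∧ M = Q * Matrix.diagonal lam * Qᵀ := by
  haveI : Nonempty (Fin N) := Fin.pos_iff_nonempty.mp hN
  have hsec : ∀ j, ∑ k, u k ^ 2 / (d k - lam j) = -1/ρ :=
    secular_eq N d u ρ hρ M hM lam heig hne
  have hdl : ∀ i j, d i - lam j ≠ 0 := fun i j => sub_ne_zero.mpr (Ne.symm (hne i j))
  have hS : ∀ j, 0 < ∑ k, u k ^ 2 / (d k - lam j) ^ 2 := by
    intro j
    apply Finset.sum_pos _ Finset.univ_nonempty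
    intro k _
    have h1 := hu k
    have h2 := hdl k j
    positivity
  have hv2 : ∀ j, v j ^ 2 * (∑ k, u k ^ 2 / (d k - lam j) ^ 2) = 1 := by
    intro j
    rw [hv j, div_pow, one_pow, Real.sq_sqrt (hS j).le, one_div,
      inv_mul_cancel₀ (hS j).ne']
  -- orthogonality
  have hQQ : Qᵀ * Q = 1 := by
    ext j l
    rw [Matrix.mul_apply]
    simp only [Matrix.transpose_apply]
    by_cases hjl : j = l
    · subst hjl
      rw [Matrix.one_apply_eq]
      calc ∑ i, Q i j * Q i j = ∑ i, v j ^ 2 * (u i ^ 2 / (d i - lam j) ^ 2) := by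
            refine Finset.sum_congr rfl fun i _ => ?_
            rw [hQ, div_mul_div_comm, ← sq, ← sq]; ring
        _ = 1 := by rw [← Finset.mul_sum, hv2 j]
    · rw [Matrix.one_apply_ne hjl]
      have hlj : lam j - lam l ≠ 0 :=
        sub_ne_zero.mpr (fun h => hjl (hmono.injective h))
      have key : ∀ i, Q i j * Q i l =
          v j * v l / (lam j - lam l) * (u i ^ 2 / (d i - lam j) - u i ^ 2 / (d i - lam l)) := by
        intro i
        rw [hQ, hQ]
        have h1 := hdl i j
        have h2 := hdl i l
        field_simp
        ring
      rw [Finset.sum_congr rfl fun i _ => key i, ← Finset.mul_sum,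
        Finset.sum_sub_distrib, hsec j, hsec l]
      simp
  -- eigen-equation
  have hMQ : M * Q = Q * Matrix.diagonal lam := by
    ext i j
    rw [Matrix.mul_diagonal, hM, Matrix.add_mul, Matrix.smul_mul]
    simp only [Matrix.add_apply, Matrix.smul_apply, smul_eq_mul, Matrix.diagonal_mul]
    have hsum : ∑ k, u k * Q k j = v j * (-1/ρ) := by
      calc ∑ k, u k * Q k j = ∑ k, v j * (u k ^ 2 / (d k - lam j)) := by
            refine Finset.sum_congr rfl fun k _ => ?_
            rw [hQ]; ring
        _ = v j * (-1/ρ) := by rw [← Finset.mul_sum, hsec j]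
    rw [show (Matrix.vecMulVec u u * Q) i j = u i * ∑ k, u k * Q k j by
      rw [Matrix.mul_apply, Finset.mul_sum]
      simp only [Matrix.vecMulVec_apply]
      exact Finset.sum_congr rfl fun k _ => mul_assoc _ _ _]
    rw [hsum, hQ]
    have h1 := hdl i j
    field_simp
    ring
  refine ⟨hQQ, hMQ, ?_⟩
  have hQQ' : Q * Qᵀ = 1 := mul_eq_one_comm.mp hQQ
  calc M = M * (Q * Qᵀ) := by rw [hQQ', mul_one]
    _ = (M * Q) * Qᵀ := by rw [mul_assoc]
    _ = Q * Matrix.diagonal lam * Qᵀ := by rw [hMQ]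
end

section
/- Let N be a positive integer, let D = diag(d_1, …, d_N) be a real diagonal N×N matrix with d_1 < d_2 < ⋯ < d_N, let u ∈ ℝ^N have u_j ≠ 0 for every j, let ρ > 0, and set M = D + ρ u uᵀ. For any real λ with λ ≠ d_j for all j, λ is an eigenvalue of M if and only if f(λ) = 0, where f(λ) = 1 + ρ ∑_{j=1}^N u_j²/(d_j − λ) is the secular function. -/
open Matrix BigOperators

/-- For `λ` different from all `d j`, `λ` is an eigenvalue of `M = D + ρ u uᵀ`
iff the secular function `f(λ) = 1 + ρ ∑ u_j²/(d_j - λ)` vanishes. -/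
theorem stmt3 (N : ℕ) (hN : 0 < N) (d : Fin N → ℝ) (hd : StrictMono d)
    (u : Fin N → ℝ) (hu : ∀ j, u j ≠ 0) (ρ : ℝ) (hρ : 0 < ρ)
    (M : Matrix (Fin N) (Fin N) ℝ)
    (hM : M = Matrix.diagonal d + ρ • Matrix.vecMulVec u u)
    (lam : ℝ) (hne : ∀ j, lam ≠ d j) :
    (∃ x : Fin N → ℝ, x ≠ 0 ∧ M.mulVec x = lam • x) ↔
      1 + ρ * ∑ j, u j ^ 2 / (d j - lam) = 0 := by
  subst hM
  have hdl : ∀ j, d j - lam ≠ 0 := fun j => sub_ne_zero.mpr fun h => hne j h.symm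
  have hmv : ∀ (x : Fin N → ℝ) (i : Fin N),
      ((Matrix.diagonal d + ρ • Matrix.vecMulVec u u).mulVec x) i
        = d i * x i + ρ * (∑ j, u j * x j) * u i := by
    intro x i
    have h2 : (Matrix.vecMulVec u u).mulVec x i = (∑ j, u j * x j) * u i := by
      rw [Finset.sum_mul]
      simp only [Matrix.mulVec, dotProduct, Matrix.vecMulVec_apply]
      exact Finset.sum_congr rfl fun j _ => by ring
    rw [Matrix.add_mulVec]
    simp only [Pi.add_apply, Matrix.mulVec_diagonal, Matrix.smul_mulVec,
      Pi.smul_apply, smul_eq_mul, h2]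
    ring
  constructor
  · rintro ⟨x, hx, hMx⟩
    set c := ∑ j, u j * x j with hc
    have hcomp : ∀ i, (d i - lam) * x i = -(ρ * c * u i) := by
      intro i
      have h1 := congrFun hMx i
      rw [hmv x i] at h1
      simp only [Pi.smul_apply, smul_eq_mul] at h1
      linarith [h1]
    have hcne : c ≠ 0 := by
      intro h0
      apply hx
      funext i
      have := hcomp i
      rw [h0] at this
      simp at this
      rcases this with h | h
      · exact absurd h (hdl i)
      · exact h
    have hxval : ∀ i, x i = -(ρ * c * u i) / (d i - lam) := by
      intro i
      rw [eq_div_iff (hdl i)]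
      linear_combination hcomp i
    have hceq : c = -(ρ * c) * ∑ j, u j ^ 2 / (d j - lam) := by
      conv_lhs => rw [hc]
      rw [Finset.mul_sum]
      apply Finset.sum_congr rfl
      intro j _
      rw [hxval j]
      field_simp
    have : 1 = -(ρ * ∑ j, u j ^ 2 / (d j - lam)) := by
      have := mul_left_cancel₀ hcne (by linarith [hceq] : c * 1 = c * (-(ρ * ∑ j, u j ^ 2 / (d j - lam))))
      linarith [this]
    linarith [this]
  · intro hf
    refine ⟨fun j => u j / (d j - lam), ?_, ?_⟩
    · intro h0
      have := congrFun h0 ⟨0, hN⟩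
      simp at this
      rcases this with h | h
      · exact hu _ h
      · exact hdl _ h
    · funext i
      rw [hmv]
      have hsum : (∑ j, u j * (u j / (d j - lam))) = ∑ j, u j ^ 2 / (d j - lam) := by
        apply Finset.sum_congr rfl
        intro j _
        field_simp
      rw [hsum]
      have hρs : ρ * ∑ j, u j ^ 2 / (d j - lam) = -1 := by linarith
      rw [hρs]
      simp only [Pi.smul_apply, smul_eq_mul]
      have h := hdl i
      field_simp
      ring
end

section
/- Let N be a positive integer and let d_1, …, d_N and λ̂_1, …, λ̂_N be real numbers satisfying the strict interlacing property d_1 < λ̂_1 < d_2 < λ̂_2 < ⋯ < d_N < λ̂_N. Define û ∈ ℝ^N by û_i = √( (∏_{j=1}^{i−1} (λ̂_j − d_i)/(d_j − d_i)) · (∏_{j=i+1}^{N} (λ̂_j − d_i)/(d_j − d_i)) · (λ̂_i − d_i) ). Then the eigenvalues of the symmetric matrix D + û ûᵀ, where D = diag(d_1, …, d_N), are exactly λ̂_1, …, λ̂_N; equivalently, det(λ I − D − û ûᵀ) = ∏_{i=1}^N (λ − λ̂_i) for all real λ. -/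
open Matrix BigOperators Polynomial Finset

/-- Löwner's theorem: with `û` recomputed from the interlacing values via the
square-root product formula, the eigenvalues of `D + û ûᵀ` are exactly `λ̂_1, …, λ̂_N`,
i.e. `det(λI - D - û ûᵀ) = ∏ (λ - λ̂_i)`. -/
theorem stmt10 (N : ℕ) (hN : 0 < N) (d lam : Fin N → ℝ)
    (h1 : ∀ i, d i < lam i)
    (h2 : ∀ i : Fin N, ∀ h : i.val + 1 < N, lam i < d ⟨i.val + 1, h⟩)
    (uh : Fin N → ℝ)
    (huh : ∀ i, uh i = Real.sqrt
      ((∏ j ∈ Finset.univ.filter (fun j => j < i), (lam j - d i) / (d j - d i)) *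
       (∏ j ∈ Finset.univ.filter (fun j => i < j), (lam j - d i) / (d j - d i)) *
       (lam i - d i))) :
    ∀ x : ℝ,
      (x • (1 : Matrix (Fin N) (Fin N) ℝ) - Matrix.diagonal d - Matrix.vecMulVec uh uh).det =
        ∏ i, (x - lam i) := by
  classical
  -- monotonicity of d
  have hadj : ∀ i : Fin N, ∀ h : i.val + 1 < N, d i < d ⟨i.val + 1, h⟩ :=
    fun i h => (h1 i).trans (h2 i h)
  have hmono : ∀ i j : Fin N, i < j → d i < d j := by
    intro i j
    obtain ⟨jv, hj⟩ := j
    induction jv with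
    | zero => intro h; exact absurd h (by simp [Fin.lt_def])
    | succ m ih =>
      intro h
      have hm : m < N := Nat.lt_of_succ_lt hj
      rcases Nat.lt_succ_iff_lt_or_eq.mp h with h' | h'
      · exact (ih hm h').trans (hadj ⟨m, hm⟩ hj)
      · have : i = ⟨m, hm⟩ := Fin.ext h'
        rw [this]; exact hadj ⟨m, hm⟩ hj
  -- j < i → lam j < d i
  have hlamlt : ∀ i j : Fin N, j < i → lam j < d i := by
    intro i j hji
    have hj1 : j.val + 1 < N := lt_of_le_of_lt (Nat.succ_le_of_lt hji) i.isLt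
    have h' : lam j < d ⟨j.val + 1, hj1⟩ := h2 j hj1
    rcases eq_or_lt_of_le (Nat.succ_le_of_lt (show j.val < i.val from hji)) with he | hlt
    · have : (⟨j.val + 1, hj1⟩ : Fin N) = i := Fin.ext he
      rwa [this] at h'
    · exact h'.trans (hmono ⟨j.val + 1, hj1⟩ i hlt)
  -- i < j → d i < lam j
  have hltlam : ∀ i j : Fin N, i ≤ j → d i < lam j := by
    intro i j hij
    rcases eq_or_lt_of_le hij with he | hlt
    · rw [he]; exact h1 j
    · exact (hmono i j hlt).trans (h1 j)
  have hdne : ∀ i j : Fin N, j ≠ i → d j - d i ≠ 0 := by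
    intro i j hne
    rcases lt_or_gt_of_ne hne with h | h
    · exact sub_ne_zero.mpr (ne_of_lt (hmono j i h))
    · exact sub_ne_zero.mpr (ne_of_gt (hmono i j h))
  -- split erase into two filters
  have hsplit : ∀ k : Fin N, (univ.filter (fun j => j < k)) ∪ (univ.filter (fun j => k < j))
      = univ.erase k := by
    intro k; ext j
    simp only [mem_union, mem_filter, mem_univ, true_and, mem_erase, and_true]
    constructor
    · rintro (h | h) <;> [exact ne_of_lt h; exact ne_of_gt h]
    · exact fun h => lt_or_gt_of_ne h
  have hdisj : ∀ k : Fin N, Disjoint (univ.filter (fun j => j < k))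
      (univ.filter (fun j => k < j)) := by
    intro k
    rw [Finset.disjoint_left]
    intro j hj hj'
    simp only [mem_filter, mem_univ, true_and] at hj hj'
    exact absurd (hj.trans hj') (lt_irrefl j)
  -- uh squared
  have hsq : ∀ k : Fin N, uh k ^ 2
      = (∏ j ∈ univ.erase k, (lam j - d k) / (d j - d k)) * (lam k - d k) := by
    intro k
    have hpos : 0 < (∏ j ∈ univ.filter (fun j => j < k), (lam j - d k) / (d j - d k)) *
        (∏ j ∈ univ.filter (fun j => k < j), (lam j - d k) / (d j - d k)) * (lam k - d k) := by
      apply mul_pos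
      apply mul_pos
      · apply Finset.prod_pos
        intro j hj
        simp only [mem_filter, mem_univ, true_and] at hj
        exact div_pos_iff.mpr (Or.inr ⟨sub_neg.mpr (hlamlt k j hj), sub_neg.mpr (hmono j k hj)⟩)
      · apply Finset.prod_pos
        intro j hj
        simp only [mem_filter, mem_univ, true_and] at hj
        exact div_pos (sub_pos.mpr (hltlam k j (le_of_lt hj))) (sub_pos.mpr (hmono k j hj))
      · exact sub_pos.mpr (h1 k)
    rw [huh k, Real.sq_sqrt hpos.le, ← hsplit k, Finset.prod_union (hdisj k)]
  -- key evaluation identity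
  have hval : ∀ k : Fin N, uh k ^ 2 * ∏ j ∈ univ.erase k, (d k - d j)
      = -(∏ i, (d k - lam i)) := by
    intro k
    rw [hsq k]
    have hcomb : (∏ j ∈ univ.erase k, (lam j - d k) / (d j - d k)) *
        ∏ j ∈ univ.erase k, (d k - d j) = ∏ j ∈ univ.erase k, (d k - lam j) := by
      rw [← Finset.prod_mul_distrib]
      refine Finset.prod_congr rfl fun j hj => ?_
      have hne : d j - d k ≠ 0 := hdne k j (Finset.mem_erase.mp hj).1
      field_simp
      ring
    rw [mul_right_comm, hcomb, ← Finset.mul_prod_erase univ (fun i => d k - lam i) (mem_univ k)]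
    ring
  -- polynomial identity
  set P : Polynomial ℝ := (∏ i, (X - C (d i)))
      - ∑ i, C (uh i ^ 2) * ∏ j ∈ univ.erase i, (X - C (d j)) with hP
  set Q : Polynomial ℝ := ∏ i, (X - C (lam i)) with hQ
  have hPQ : P = Q := by
    have hcard : (#(univ : Finset (Fin N)) : WithBot ℕ) = (N : WithBot ℕ) := by
      simp
    apply Polynomial.eq_of_degree_sub_lt_of_eval_index_eq (univ : Finset (Fin N))
      (v := d)
    · intro i _ j _ hij
      by_contra hne
      exact hdne j i hne (sub_eq_zero.mpr hij)
    · -- degree bound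
      rw [hcard]
      have hmQ : Q.Monic := monic_prod_of_monic _ _ fun i _ => monic_X_sub_C _
      have hmD : (∏ i, (X - C (d i)) : Polynomial ℝ).Monic :=
        monic_prod_of_monic _ _ fun i _ => monic_X_sub_C _
      have hdQ : Q.natDegree = N := by
        rw [hQ, natDegree_prod_of_monic _ _ fun i _ => monic_X_sub_C _]
        simp [natDegree_X_sub_C]
      have hdD : (∏ i, (X - C (d i)) : Polynomial ℝ).natDegree = N := by
        rw [natDegree_prod_of_monic _ _ fun i _ => monic_X_sub_C _]
        simp [natDegree_X_sub_C]
      have hsub1 : ((∏ i, (X - C (d i))) - Q).degree < (N : WithBot ℕ) := by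
        rcases eq_or_ne (∏ i, (X - C (d i))) Q with he | hne
        · rw [he, sub_self, degree_zero]
          exact_mod_cast WithBot.bot_lt_coe N
        · have := Polynomial.degree_sub_lt
            (by rw [degree_eq_natDegree hmD.ne_zero, degree_eq_natDegree hmQ.ne_zero, hdD, hdQ])
            hmD.ne_zero (hmD.leadingCoeff.trans hmQ.leadingCoeff.symm)
          rwa [degree_eq_natDegree hmD.ne_zero, hdD] at this
      have hsub2 : (∑ i, C (uh i ^ 2) * ∏ j ∈ univ.erase i, (X - C (d j))
          : Polynomial ℝ).degree < (N : WithBot ℕ) := by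
        refine lt_of_le_of_lt (degree_sum_le _ _) ?_
        rw [Finset.sup_lt_iff (by exact_mod_cast WithBot.bot_lt_coe N)]
        intro i _
        refine lt_of_le_of_lt (degree_mul_le _ _) ?_
        have hpe : (∏ j ∈ univ.erase i, (X - C (d j)) : Polynomial ℝ).degree
            ≤ ((N - 1 : ℕ) : WithBot ℕ) := by
          refine le_trans (degree_prod_le _ _) ?_
          have : ∀ j ∈ univ.erase i, ((X : Polynomial ℝ) - C (d j)).degree = 1 :=
            fun j _ => degree_X_sub_C _
          rw [Finset.sum_congr rfl this]
          simp [Finset.card_erase_of_mem]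
        calc ((C (uh i ^ 2) : Polynomial ℝ)).degree
              + (∏ j ∈ univ.erase i, (X - C (d j)) : Polynomial ℝ).degree
            ≤ 0 + ((N - 1 : ℕ) : WithBot ℕ) := add_le_add degree_C_le hpe
          _ = ((N - 1 : ℕ) : WithBot ℕ) := by rw [zero_add]
          _ < (N : WithBot ℕ) := by exact_mod_cast Nat.sub_lt hN one_pos
      calc (P - Q).degree
          ≤ max ((∏ i, (X - C (d i))) - Q).degree
              (∑ i, C (uh i ^ 2) * ∏ j ∈ univ.erase i, (X - C (d j))
                : Polynomial ℝ).degree := by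
            rw [hP, sub_right_comm]
            exact degree_sub_le _ _
        _ < (N : WithBot ℕ) := max_lt hsub1 hsub2
    · intro k _
      have hev : P.eval (d k) = -(uh k ^ 2 * ∏ j ∈ univ.erase k, (d k - d j)) := by
        rw [hP]
        rw [eval_sub, eval_prod, eval_finset_sum]
        have hz : (∏ i, (d k - d i)) = 0 :=
          Finset.prod_eq_zero (mem_univ k) (sub_self _)
        simp only [eval_sub, eval_X, eval_C] at hz ⊢
        rw [hz, zero_sub]
        congr 1
        rw [Finset.sum_eq_single k]
        · simp [eval_prod]
        · intro i _ hik
          have : (∏ j ∈ univ.erase i, ((X : Polynomial ℝ) - C (d j))).eval (d k) = 0 := by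
            rw [eval_prod]
            exact Finset.prod_eq_zero (Finset.mem_erase.mpr ⟨Ne.symm hik, mem_univ k⟩)
              (by simp)
          rw [eval_mul, this, mul_zero]
        · intro h; exact absurd (mem_univ k) h
      rw [hev, hval k, neg_neg, hQ, eval_prod]
      simp
  -- bridge via charmatrix
  set A : Matrix (Fin N) (Fin N) ℝ := Matrix.diagonal d + Matrix.vecMulVec uh uh with hA
  have hbridge : ∀ x : ℝ,
      (x • (1 : Matrix (Fin N) (Fin N) ℝ) - Matrix.diagonal d - Matrix.vecMulVec uh uh).det
        = ((charmatrix A).det).eval x := by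
    intro x
    rw [← Polynomial.coe_evalRingHom, RingHom.map_det]
    congr 1
    ext i j
    by_cases h : i = j
    · subst h
      simp [charmatrix_apply_eq, hA, Matrix.vecMulVec_apply, Matrix.sub_apply,
        Matrix.smul_apply, Matrix.one_apply_eq, Matrix.add_apply, Matrix.diagonal_apply_eq,
        Matrix.map_apply, coe_evalRingHom]
      ring
    · simp [charmatrix_apply_ne _ _ _ h, hA, Matrix.vecMulVec_apply, Matrix.sub_apply,
        Matrix.smul_apply, Matrix.one_apply_ne h, Matrix.add_apply,
        Matrix.diagonal_apply_ne _ h, Matrix.map_apply, coe_evalRingHom]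
  -- determinant formula away from the poles
  have hdet : ∀ x : ℝ, (∀ i, x - d i ≠ 0) →
      (x • (1 : Matrix (Fin N) (Fin N) ℝ) - Matrix.diagonal d - Matrix.vecMulVec uh uh).det
        = P.eval x := by
    intro x he
    have hfact : x • (1 : Matrix (Fin N) (Fin N) ℝ) - Matrix.diagonal d - Matrix.vecMulVec uh uh
        = Matrix.diagonal (fun i => x - d i) *
          (1 + Matrix.vecMulVec (fun i => uh i / (x - d i)) (fun i => -uh i)) := by
      ext i j
      by_cases h : i = j
      · subst h
        simp only [Matrix.sub_apply, Matrix.smul_apply, Matrix.one_apply_eq,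
          Matrix.diagonal_apply_eq, Matrix.vecMulVec_apply, Matrix.diagonal_mul,
          Matrix.add_apply, smul_eq_mul, mul_one]
        rw [show (x - d i) * (1 + uh i / (x - d i) * -uh i)
            = (x - d i) + uh i / (x - d i) * (x - d i) * -uh i from by ring,
          div_mul_cancel₀ _ (he i)]
        ring
      · simp only [Matrix.sub_apply, Matrix.smul_apply, Matrix.one_apply_ne h,
          Matrix.diagonal_apply_ne _ h, Matrix.vecMulVec_apply, Matrix.diagonal_mul,
          Matrix.add_apply, smul_eq_mul, mul_zero, zero_sub]
        field_simp [he i]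
        ring
    rw [hfact, det_mul, det_diagonal,
      Matrix.vecMulVec_eq Unit, Matrix.det_one_add_replicateCol_mul_replicateRow]
    simp only [hP, eval_sub, eval_prod, eval_finset_sum, eval_mul, eval_C, eval_X, dotProduct]
    rw [mul_add, mul_one, Finset.mul_sum, sub_eq_add_neg]
    congr 1
    rw [← Finset.sum_neg_distrib]
    refine Finset.sum_congr rfl fun i _ => ?_
    rw [← Finset.mul_prod_erase univ (fun j => x - d j) (mem_univ i),
      show ((x - d i) * ∏ j ∈ univ.erase i, (x - d j)) * (-uh i * (uh i / (x - d i)))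
          = uh i / (x - d i) * (x - d i) * (-uh i * ∏ j ∈ univ.erase i, (x - d j))
        from by ring,
      div_mul_cancel₀ _ (he i)]
    ring
  -- conclude
  have hfin : (charmatrix A).det = Q := by
    apply Polynomial.eq_of_infinite_eval_eq
    have hinf : ((Set.range d)ᶜ : Set ℝ).Infinite := (Set.finite_range d).infinite_compl
    refine hinf.mono ?_
    intro x hx
    simp only [Set.mem_compl_iff, Set.mem_range, not_exists] at hx
    have he : ∀ i, x - d i ≠ 0 := fun i h => hx i (by linarith [sub_eq_zero.mp h])
    have : ((charmatrix A).det).eval x = Q.eval x := by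
      rw [← hbridge x, hdet x he, hPQ]
    exact this
  intro x
  rw [hbridge x, hfin, hQ, eval_prod]
  simp
end

section
/- Let m, n, r be positive integers, let δ > 0 and Δ ≥ δ, let d_1, …, d_m and λ_1, …, λ_n be real numbers with δ ≤ d_i − λ_j ≤ Δ for all i, j, and let u ∈ ℝ^m, v ∈ ℝ^n. Suppose ω_1, …, ω_r and α_1, …, α_r are real numbers such that |1/x − ∑_{k=1}^r ω_k e^{−α_k x}| ≤ ε for every x ∈ [δ, Δ]. Define A ∈ ℝ^{m×r} by A_{ik} = u_i ω_k e^{−α_k d_i} and B ∈ ℝ^{n×r} by B_{jk} = v_j e^{α_k λ_j}. Then the Cauchy-like matrix C with entries C_{ij} = u_i v_j/(d_i − λ_j) satisfies |C_{ij} − (A Bᵀ)_{ij}| ≤ |u_i| |v_j| ε for all i, j; in particular C is within entrywise error |u_i||v_j| ε of the matrix A Bᵀ, whose rank is at most r. -/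
open Matrix BigOperators

/-- A sum-of-exponentials approximation of `1/x` on `[δ, Δ]` gives an entrywise
accurate rank-`r` approximation `A Bᵀ` of the Cauchy-like matrix
`C_{ij} = u_i v_j / (d_i - λ_j)`. -/
theorem stmt13 (m n r : ℕ) (hm : 0 < m) (hn : 0 < n) (hr : 0 < r)
    (δ Δ ε : ℝ) (hδ : 0 < δ) (hΔ : δ ≤ Δ)
    (d : Fin m → ℝ) (lam : Fin n → ℝ)
    (hdl : ∀ i j, δ ≤ d i - lam j ∧ d i - lam j ≤ Δ)
    (u : Fin m → ℝ) (v : Fin n → ℝ)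
    (ω α : Fin r → ℝ)
    (happrox : ∀ x ∈ Set.Icc δ Δ,
      |1 / x - ∑ k, ω k * Real.exp (-(α k) * x)| ≤ ε)
    (A : Matrix (Fin m) (Fin r) ℝ)
    (hA : ∀ i k, A i k = u i * ω k * Real.exp (-(α k) * d i))
    (B : Matrix (Fin n) (Fin r) ℝ)
    (hB : ∀ j k, B j k = v j * Real.exp (α k * lam j))
    (C : Matrix (Fin m) (Fin n) ℝ)
    (hC : ∀ i j, C i j = u i * v j / (d i - lam j)) :
    (∀ i j, |C i j - (A * Bᵀ) i j| ≤ |u i| * |v j| * ε) ∧ (A * Bᵀ).rank ≤ r := by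
  constructor
  · intro i j
    have hx := hdl i j
    have hxmem : d i - lam j ∈ Set.Icc δ Δ := ⟨hx.1, hx.2⟩
    have hxpos : 0 < d i - lam j := lt_of_lt_of_le hδ hx.1
    have hAB : (A * Bᵀ) i j = u i * v j * ∑ k, ω k * Real.exp (-(α k) * (d i - lam j)) := by
      simp only [Matrix.mul_apply, Matrix.transpose_apply, hA, hB, Finset.mul_sum]
      refine Finset.sum_congr rfl fun k _ => ?_
      rw [show -α k * (d i - lam j) = -α k * d i + α k * lam j by ring, Real.exp_add]
      ring
    have hCij : C i j = u i * v j * (1 / (d i - lam j)) := by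
      rw [hC]; ring
    rw [hCij, hAB, ← mul_sub, abs_mul, abs_mul]
    gcongr
    exact happrox _ hxmem
  · calc (A * Bᵀ).rank ≤ A.rank := Matrix.rank_mul_le_left A Bᵀ
      _ ≤ r := by simpa using A.rank_le_card_width
end

section
/- Let B be a real m×n matrix of rank r ≥ 1. Then there exist r column indices j_1, …, j_r (pairwise distinct) and a real r×n matrix X such that B = B_J X, where B_J is the m×r matrix whose k-th column is the j_k-th column of B, every entry of X satisfies |X_{kl}| ≤ 1, and the r×r submatrix of X formed by the columns j_1, …, j_r is the identity matrix. -/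
open Matrix BigOperators

open Submodule in
lemma extract_li {α β : Type*} [Fintype β] {r : ℕ} (v : α → (β → ℝ))
    (h : Module.finrank ℝ (span ℝ (Set.range v)) = r) :
    ∃ f : Fin r → α, Function.Injective f ∧ LinearIndependent ℝ (v ∘ f) := by
  obtain ⟨b, hbs, hbspan, hbli⟩ := exists_linearIndependent ℝ (Set.range v)
  have hfin : b.Finite := hbli.finite
  have : Fintype b := hfin.fintype
  have hcard : b.toFinset.card = r := by
    rw [← finrank_span_set_eq_card hbli, hbspan, h]
  have e : Fin r ≃ b := by
    refine (Fintype.equivOfCardEq ?_).symm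
    rw [Fintype.card_fin, ← Set.toFinset_card, hcard]
  choose g hg using fun x : b => hbs x.2
  refine ⟨fun k => g (e k), ?_, ?_⟩
  · intro k1 k2 hk
    have h2 : v (g (e k1)) = v (g (e k2)) := by simp only at hk; rw [hk]
    rw [hg, hg] at h2
    exact e.injective (Subtype.ext h2)
  · have h3 : v ∘ (fun k => g (e k)) = Subtype.val ∘ e := by
      funext k; simp [Function.comp, hg]
    rw [h3]
    exact hbli.comp e e.injective

open Submodule in
lemma exists_minor {m n r : ℕ} (B : Matrix (Fin m) (Fin n) ℝ) (hrank : B.rank = r) :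
    ∃ (I : Fin r → Fin m) (J : Fin r → Fin n), (B.submatrix I J).det ≠ 0 := by
  have hc : Module.finrank ℝ (span ℝ (Set.range Bᵀ)) = r := by
    exact (Matrix.rank_eq_finrank_span_cols B).symm.trans hrank
  obtain ⟨j₀, hj₀, hli⟩ := extract_li Bᵀ hc
  set M₀ := B.submatrix id j₀ with hM₀
  have hMt : Bᵀ ∘ j₀ = M₀ᵀ := by funext k i; rfl
  rw [hMt] at hli
  have hrankM : M₀ᵀ.rank = r := by
    rw [LinearIndependent.rank_matrix (M := M₀ᵀ) hli, Fintype.card_fin]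
  have hrows : Module.finrank ℝ (span ℝ (Set.range M₀)) = r := by
    exact (Matrix.rank_eq_finrank_span_row M₀).symm.trans ((Matrix.rank_transpose M₀).symm.trans hrankM)
  obtain ⟨I₀, hI₀, hli2⟩ := extract_li M₀ hrows
  refine ⟨I₀, j₀, ?_⟩
  have : M₀ ∘ I₀ = B.submatrix I₀ j₀ := by funext k l; rfl
  rw [this] at hli2
  intro hdet
  have := (Matrix.linearIndependent_rows_iff_isUnit (A := B.submatrix I₀ j₀)).mp hli2
  rw [Matrix.isUnit_iff_isUnit_det, hdet] at this
  simp at this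

lemma col_submatrix_eq_mul {ι : Type*} [Fintype ι] {n r : ℕ} (D : Matrix ι (Fin n) ℝ) (J : Fin r → Fin n) :
    D.submatrix id J = D * (1 : Matrix (Fin n) (Fin n) ℝ).submatrix id J := by
  ext i k; simp [Matrix.mul_apply, Matrix.one_apply]

lemma row_submatrix_eq_mul {κ : Type*} [Fintype κ] {m r : ℕ} (D : Matrix (Fin m) κ ℝ) (I : Fin r → Fin m) :
    D.submatrix I id = (1 : Matrix (Fin m) (Fin m) ℝ).submatrix I id * D := by
  ext k l; simp [Matrix.mul_apply, Matrix.one_apply]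

/-- Existence of an exact interpolative decomposition: a rank-`r` matrix `B`
equals `B(:, J) X` where `J` selects `r` distinct columns of `B`, all entries of
`X` are at most `1` in magnitude, and the columns of `X` indexed by `J` form the
`r × r` identity matrix. -/
theorem stmt16 (m n r : ℕ) (hr : 1 ≤ r)
    (B : Matrix (Fin m) (Fin n) ℝ) (hrank : B.rank = r) :
    ∃ j : Fin r → Fin n, Function.Injective j ∧
      ∃ X : Matrix (Fin r) (Fin n) ℝ,
        B = B.submatrix id j * X ∧
        (∀ k l, |X k l| ≤ 1) ∧
        (∀ k l : Fin r, X k (j l) = if k = l then 1 else 0) := by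
  classical
  obtain ⟨I₀, J₀, hdet0⟩ := exists_minor B hrank
  -- maximize |det| over all submatrix selections
  obtain ⟨p, -, hp⟩ := Finset.exists_max_image Finset.univ
    (fun p : (Fin r → Fin m) × (Fin r → Fin n) => |(B.submatrix p.1 p.2).det|)
    ⟨(I₀, J₀), Finset.mem_univ _⟩
  obtain ⟨I, J⟩ := p
  set A := B.submatrix I J with hA
  have hdmax : ∀ (I' : Fin r → Fin m) (J' : Fin r → Fin n),
      |(B.submatrix I' J').det| ≤ |A.det| := fun I' J' => hp (I', J') (Finset.mem_univ _)
  have hd : A.det ≠ 0 := by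
    intro h
    have h1 := hdmax I₀ J₀
    rw [h, abs_zero] at h1
    exact hdet0 (abs_eq_zero.mp (le_antisymm h1 (abs_nonneg _)))
  have hJ : Function.Injective J := by
    intro k1 k2 hk
    by_contra hne
    exact hd (Matrix.det_zero_of_column_eq hne (fun i => by simp [hA, hk]))
  -- the coefficient matrix
  set X : Matrix (Fin r) (Fin n) ℝ :=
    Matrix.of fun k l => (A.det)⁻¹ * Matrix.cramer A (fun k' => B (I k') l) k with hX
  -- property 1 : A *ᵥ (column l of X) = column l of B restricted to I
  have hAx : ∀ l, A *ᵥ (fun k => X k l) = fun k' => B (I k') l := by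
    intro l
    have : (fun k => X k l) = (A.det)⁻¹ • Matrix.cramer A (fun k' => B (I k') l) := by
      funext k; simp [hX, Pi.smul_apply, smul_eq_mul]
    rw [this, Matrix.mulVec_smul, Matrix.mulVec_cramer, smul_smul,
      inv_mul_cancel₀ hd, one_smul]
  have hAX : A * X = B.submatrix I id := by
    ext k' l
    have := congrFun (hAx l) k'
    simpa [Matrix.mul_apply, Matrix.mulVec, dotProduct] using this
  -- bound on entries
  have hbound : ∀ k l, |X k l| ≤ 1 := by
    intro k l
    have hup : A.updateCol k (fun k' => B (I k') l) = B.submatrix I (Function.update J k l) := by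
      ext i jj
      rw [Matrix.updateCol_apply]
      by_cases h : jj = k <;> simp [h, Function.update_apply, hA]
    have hle : |Matrix.cramer A (fun k' => B (I k') l) k| ≤ |A.det| := by
      rw [Matrix.cramer_apply, hup]
      exact hdmax I (Function.update J k l)
    have : |X k l| = |A.det|⁻¹ * |Matrix.cramer A (fun k' => B (I k') l) k| := by
      simp [hX, abs_mul, abs_inv]
    rw [this, ← div_eq_inv_mul]
    exact div_le_one_of_le₀ hle (abs_nonneg _)
  -- identity columns
  have hid : ∀ k l : Fin r, X k (J l) = if k = l then 1 else 0 := by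
    intro k l
    have hb : Matrix.cramer A (fun k' => B (I k') (J l)) = Pi.single l A.det :=
      Matrix.cramer_row_self A (fun k' => B (I k') (J l)) l (fun jj => rfl)
    simp only [hX, Matrix.of_apply, hb, Pi.single_apply]
    by_cases h : k = l <;> simp [h, inv_mul_cancel₀ hd]
  -- rank / kernel argument
  set M := B.submatrix I id with hM
  have hrM : M.rank = r := by
    have h1 : M.rank ≤ r := by
      rw [hM, row_submatrix_eq_mul]
      exact (Matrix.rank_mul_le_right _ _).trans hrank.le
    have hrA : A.rank = r := by
      rw [Matrix.rank_of_isUnit A ((Matrix.isUnit_iff_isUnit_det A).mpr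
        (isUnit_iff_ne_zero.mpr hd)), Fintype.card_fin]
    have h2 : r ≤ M.rank := by
      have h4 : A = M * (1 : Matrix (Fin n) (Fin n) ℝ).submatrix id J := by
        rw [← col_submatrix_eq_mul]; rfl
      calc r = A.rank := hrA.symm
        _ ≤ M.rank := by rw [h4]; exact Matrix.rank_mul_le_left _ _
    exact le_antisymm h1 h2
  have hker : LinearMap.ker B.mulVecLin = LinearMap.ker M.mulVecLin := by
    have hle : LinearMap.ker B.mulVecLin ≤ LinearMap.ker M.mulVecLin := by
      intro v hv
      have hv' : B *ᵥ v = 0 := hv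
      show M *ᵥ v = 0
      funext k
      show (fun j => M k j) ⬝ᵥ v = 0
      have : (fun j => M k j) ⬝ᵥ v = (B *ᵥ v) (I k) := rfl
      rw [this, hv']; rfl
    have e1 := LinearMap.finrank_range_add_finrank_ker B.mulVecLin
    have e2 := LinearMap.finrank_range_add_finrank_ker M.mulVecLin
    rw [Module.finrank_pi] at e1 e2
    have hrB' : Module.finrank ℝ (LinearMap.range B.mulVecLin) = r := hrank
    have hrM' : Module.finrank ℝ (LinearMap.range M.mulVecLin) = r := hrM
    rw [hrB'] at e1; rw [hrM'] at e2
    exact Submodule.eq_of_le_of_finrank_le hle (by omega)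
  -- conclude
  refine ⟨J, hJ, X, ?_, hbound, hid⟩
  set Q := (1 : Matrix (Fin n) (Fin n) ℝ).submatrix id J with hQ
  set Y := (1 : Matrix (Fin n) (Fin n) ℝ) - Q * X with hY
  have hMY : M * Y = 0 := by
    rw [hY, Matrix.mul_sub, Matrix.mul_one, ← Matrix.mul_assoc]
    have hMQ : M * Q = A := by
      rw [hQ, ← col_submatrix_eq_mul]; rfl
    rw [hMQ, hAX, sub_self]
  have hBY : B * Y = 0 := by
    ext i l
    have hu : (fun a => Y a l) ∈ LinearMap.ker M.mulVecLin := by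
      show M *ᵥ (fun a => Y a l) = 0
      funext k
      have h1 : (M *ᵥ fun a => Y a l) k = (M * Y) k l := rfl
      rw [h1, hMY]; rfl
    rw [← hker] at hu
    have h2 : B *ᵥ (fun a => Y a l) = 0 := hu
    have h3 : (B * Y) i l = (B *ᵥ fun a => Y a l) i := rfl
    rw [h3, h2]; rfl
  rw [Matrix.mul_sub, Matrix.mul_one, sub_eq_zero] at hBY
  rw [col_submatrix_eq_mul B J, Matrix.mul_assoc, ← hQ, ← hBY]
end
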